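/- arXiv:2012.09436 — 2 statements merged into one kernel-verified Lean document; each statement's English description precedes it below -/
import Mathlib

section
/- Let η_Δ = Σ_{v=0}^{Δ} v·2^{−v}/(2 − 2^{−Δ}) and κ_Δ = Σ_{v=0}^{Δ} (v − η_Δ)²·2^{−v}/(2 − 2^{−Δ}). Then for every fixed integer u ≥ 0, (1/κ_Δ) Σ_{i=0}^{Δ−u} (2^{−i}/(2 − 2^{−Δ})) (i − η_Δ)(i + u − η_Δ) converges to 1 as Δ → ∞ (Δ ranging over integers ≥ u). -/
open Filter
open scoped Topology

noncomputable section

/-- `η_Δ = Σ_{v=0}^Δ v·2^{-v} / (2 - 2^{-Δ})`. -/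
def etaD (m : ℕ) : ℝ :=
  (∑ v ∈ Finset.range (m+1), (v:ℝ) * (2:ℝ) ^ (-(v:ℝ))) / (2 - (2:ℝ) ^ (-(m:ℝ)))

/-- `κ_Δ = Σ_{v=0}^Δ (v-η_Δ)²·2^{-v} / (2 - 2^{-Δ})`. -/
def kappaD (m : ℕ) : ℝ :=
  (∑ v ∈ Finset.range (m+1), ((v:ℝ) - etaD m)^2 * (2:ℝ) ^ (-(v:ℝ))) /
    (2 - (2:ℝ) ^ (-(m:ℝ)))

lemma rpow_neg_nat (v : ℕ) : (2:ℝ) ^ (-(v:ℝ)) = ((2:ℝ)⁻¹) ^ v := by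
  rw [Real.rpow_neg (by norm_num), Real.rpow_natCast, inv_pow]

def T0 (n : ℕ) : ℝ := ∑ i ∈ Finset.range (n+1), (2:ℝ) ^ (-(i:ℝ))
def T1 (n : ℕ) : ℝ := ∑ i ∈ Finset.range (n+1), (i:ℝ) * (2:ℝ) ^ (-(i:ℝ))
def T2 (n : ℕ) : ℝ := ∑ i ∈ Finset.range (n+1), (i:ℝ)^2 * (2:ℝ) ^ (-(i:ℝ))

lemma T0_eq (n : ℕ) : T0 n = 2 - ((2:ℝ)⁻¹) ^ n := by
  unfold T0
  simp only [rpow_neg_nat]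
  induction n with
  | zero => norm_num
  | succ n ih => rw [Finset.sum_range_succ, ih]; ring

lemma T1_eq (n : ℕ) : T1 n = 2 - ((n:ℝ) + 2) * ((2:ℝ)⁻¹) ^ n := by
  unfold T1
  simp only [rpow_neg_nat]
  induction n with
  | zero => norm_num
  | succ n ih => rw [Finset.sum_range_succ, ih]; push_cast; ring

lemma T2_eq (n : ℕ) : T2 n = 6 - ((n:ℝ)^2 + 4*(n:ℝ) + 6) * ((2:ℝ)⁻¹) ^ n := by
  unfold T2
  simp only [rpow_neg_nat]
  induction n with
  | zero => norm_num
  | succ n ih => rw [Finset.sum_range_succ, ih]; push_cast; ring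

lemma tend_pow : Tendsto (fun n : ℕ => ((2:ℝ)⁻¹) ^ n) atTop (𝓝 0) :=
  tendsto_pow_atTop_nhds_zero_of_lt_one (by norm_num) (by norm_num)

lemma tend_mul_pow (k : ℕ) :
    Tendsto (fun n : ℕ => (n:ℝ)^k * ((2:ℝ)⁻¹) ^ n) atTop (𝓝 0) :=
  tendsto_pow_const_mul_const_pow_of_abs_lt_one k (by rw [abs_of_pos] <;> norm_num)

lemma tend_T0 : Tendsto T0 atTop (𝓝 2) := by
  refine Tendsto.congr (fun n => (T0_eq n).symm) ?_
  simpa using tendsto_const_nhds.sub tend_pow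

lemma tend_T1 : Tendsto T1 atTop (𝓝 2) := by
  refine Tendsto.congr (fun n => (T1_eq n).symm) ?_
  have h : Tendsto (fun n : ℕ => ((n:ℝ) + 2) * ((2:ℝ)⁻¹) ^ n) atTop (𝓝 0) := by
    have := ((tend_mul_pow 1).add (tend_pow.const_mul 2))
    simp only [pow_one] at this
    convert this using 2 with n
    · ring
    · norm_num
  simpa using tendsto_const_nhds.sub h

lemma tend_T2 : Tendsto T2 atTop (𝓝 6) := by
  refine Tendsto.congr (fun n => (T2_eq n).symm) ?_
  have h : Tendsto (fun n : ℕ => ((n:ℝ)^2 + 4*(n:ℝ) + 6) * ((2:ℝ)⁻¹) ^ n) atTop (𝓝 0) := by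
    have := ((tend_mul_pow 2).add ((tend_mul_pow 1).const_mul 4)).add (tend_pow.const_mul 6)
    simp only [pow_one] at this
    convert this using 2 with n
    · ring
    · norm_num
  simpa using tendsto_const_nhds.sub h

def A (m : ℕ) : ℝ := 2 - (2:ℝ) ^ (-(m:ℝ))

lemma A_pos (m : ℕ) : 0 < A m := by
  unfold A
  rw [rpow_neg_nat]
  have h1 : ((2:ℝ)⁻¹) ^ m ≤ 1 := pow_le_one₀ (by norm_num) (by norm_num)
  linarith

lemma tend_A : Tendsto A atTop (𝓝 2) := by
  unfold A
  simp only [rpow_neg_nat]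
  simpa using tendsto_const_nhds.sub tend_pow

lemma etaD_eq (m : ℕ) : etaD m = T1 m / A m := rfl

lemma tend_eta : Tendsto etaD atTop (𝓝 1) := by
  have := tend_T1.div tend_A (by norm_num)
  norm_num at this
  exact this.congr (fun m => (etaD_eq m).symm)

lemma kappaD_eq (m : ℕ) :
    kappaD m = (T2 m - 2 * etaD m * T1 m + (etaD m)^2 * T0 m) / A m := by
  unfold kappaD T2 T1 T0 A
  congr 1
  rw [Finset.mul_sum, Finset.mul_sum, ← Finset.sum_sub_distrib, ← Finset.sum_add_distrib]
  exact Finset.sum_congr rfl (fun v _ => by ring)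

lemma tend_kappa : Tendsto kappaD atTop (𝓝 2) := by
  have h : Tendsto (fun m => (T2 m - 2 * etaD m * T1 m + (etaD m)^2 * T0 m) / A m)
      atTop (𝓝 ((6 - 2 * 1 * 2 + 1^2 * 2) / 2)) := by
    exact ((tend_T2.sub (((tendsto_const_nhds.mul tend_eta).mul tend_T1))).add
      ((tend_eta.pow 2).mul tend_T0)).div tend_A (by norm_num)
  norm_num at h
  exact Tendsto.congr (fun m => (kappaD_eq m).symm) h

/-- For every fixed `u ≥ 0`,
`(1/κ_Δ) Σ_{i=0}^{Δ-u} (2^{-i}/(2-2^{-Δ})) (i-η_Δ)(i+u-η_Δ) → 1` as `Δ → ∞`. -/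
theorem weighted_autocovariance_ratio_tendsto_one (u : ℕ) :
    Tendsto
      (fun Δ : ℕ =>
        (1 / kappaD Δ) *
          ∑ i ∈ Finset.range (Δ - u + 1),
            ((2:ℝ) ^ (-(i:ℝ)) / (2 - (2:ℝ) ^ (-(Δ:ℝ)))) *
              (((i:ℝ) - etaD Δ) * ((i:ℝ) + (u:ℝ) - etaD Δ)))
      atTop (𝓝 1) := by
  -- rewrite the inner sum
  have hsum : ∀ Δ : ℕ,
      (∑ i ∈ Finset.range (Δ - u + 1),
        ((2:ℝ) ^ (-(i:ℝ)) / (2 - (2:ℝ) ^ (-(Δ:ℝ)))) *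
          (((i:ℝ) - etaD Δ) * ((i:ℝ) + (u:ℝ) - etaD Δ)))
      = (T2 (Δ - u) + ((u:ℝ) - 2 * etaD Δ) * T1 (Δ - u)
          + ((etaD Δ)^2 - (u:ℝ) * etaD Δ) * T0 (Δ - u)) / A Δ := by
    intro Δ
    unfold T2 T1 T0 A
    rw [Finset.mul_sum, Finset.mul_sum, ← Finset.sum_add_distrib, ← Finset.sum_add_distrib,
      Finset.sum_div]
    exact Finset.sum_congr rfl (fun i _ => by field_simp; ring)
  have hnum : Tendsto
      (fun Δ : ℕ => (T2 (Δ - u) + ((u:ℝ) - 2 * etaD Δ) * T1 (Δ - u)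
          + ((etaD Δ)^2 - (u:ℝ) * etaD Δ) * T0 (Δ - u)) / A Δ)
      atTop (𝓝 2) := by
    have hc : Tendsto (fun Δ : ℕ => Δ - u) atTop atTop := tendsto_sub_atTop_nat u
    have h : Tendsto
        (fun Δ : ℕ => (T2 (Δ - u) + ((u:ℝ) - 2 * etaD Δ) * T1 (Δ - u)
          + ((etaD Δ)^2 - (u:ℝ) * etaD Δ) * T0 (Δ - u)) / A Δ)
        atTop (𝓝 ((6 + ((u:ℝ) - 2 * 1) * 2 + (1^2 - (u:ℝ) * 1) * 2) / 2)) := by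
      exact (((tend_T2.comp hc).add
          ((tendsto_const_nhds.sub (tend_eta.const_mul 2)).mul (tend_T1.comp hc))).add
          (((tend_eta.pow 2).sub (tend_eta.const_mul (u:ℝ))).mul (tend_T0.comp hc))).div
          tend_A (by norm_num)
    have : (6 + ((u:ℝ) - 2 * 1) * 2 + (1^2 - (u:ℝ) * 1) * 2) / 2 = 2 := by ring
    rwa [this] at h
  have hfin : Tendsto
      (fun Δ : ℕ => (1 / kappaD Δ) *
        ((T2 (Δ - u) + ((u:ℝ) - 2 * etaD Δ) * T1 (Δ - u)
          + ((etaD Δ)^2 - (u:ℝ) * etaD Δ) * T0 (Δ - u)) / A Δ))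
      atTop (𝓝 ((1/2) * 2)) :=
    ((tendsto_const_nhds.div tend_kappa (by norm_num)).mul hnum)
  norm_num at hfin
  refine hfin.congr (fun Δ => ?_)
  rw [hsum Δ, one_div]
end
end

section
/- Let Δ ≥ 0 be an integer, δ₁, δ₂ ∈ ℝ, and let a: ℕ → ℝ be any sequence. Then Σ_{u=0}^{Δ} Σ_{u'=0}^{Δ} 2^{(max(u,u')−u)δ₁ + (max(u,u')−u')δ₂} · 2^{−(u+u'+|u−u'|)/2} / (2 − 2^{−Δ}) · a(|u−u'|) = a(0) + Σ_{u=1}^{Δ} (2^{uδ₁} + 2^{uδ₂}) · 2^{−u} · ((2 − 2^{−Δ+u})/(2 − 2^{−Δ})) · a(u). -/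
noncomputable section

open Finset

private def T (δ1 δ2 : ℝ) (a : ℕ → ℝ) (u u' : ℕ) : ℝ :=
  (2:ℝ) ^ (((max u u' : ℕ) - (u:ℝ)) * δ1 + ((max u u' : ℕ) - (u':ℝ)) * δ2) *
    (2:ℝ) ^ (-(((u:ℝ) + (u':ℝ) + |(u:ℝ) - (u':ℝ)|) / 2)) *
    a ((u:ℤ) - (u':ℤ)).natAbs

private lemma T_right (δ1 δ2 : ℝ) (a : ℕ → ℝ) {u N : ℕ} (h : u ≤ N) :
    T δ1 δ2 a u N = (2:ℝ) ^ (((N - u : ℕ):ℝ) * δ1) * (2:ℝ) ^ (-(N:ℝ)) * a (N - u) := by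
  have hm : max u N = N := max_eq_right h
  have hc : (u:ℝ) ≤ (N:ℝ) := by exact_mod_cast h
  have habs : |(u:ℝ) - (N:ℝ)| = (N:ℝ) - u := by
    rw [abs_sub_comm, abs_of_nonneg (sub_nonneg.2 hc)]
  have hnat : ((u:ℤ) - (N:ℤ)).natAbs = N - u := by omega
  have hcast : ((N - u : ℕ):ℝ) = (N:ℝ) - u := Nat.cast_sub h
  unfold T
  rw [hm, habs, hnat, hcast,
    show ((N:ℝ) - u) * δ1 + ((N:ℝ) - N) * δ2 = ((N:ℝ) - u) * δ1 by ring,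
    show -(((u:ℝ) + N + ((N:ℝ) - u)) / 2) = -(N:ℝ) by ring]

private lemma T_left (δ1 δ2 : ℝ) (a : ℕ → ℝ) {u' N : ℕ} (h : u' ≤ N) :
    T δ1 δ2 a N u' = (2:ℝ) ^ (((N - u' : ℕ):ℝ) * δ2) * (2:ℝ) ^ (-(N:ℝ)) * a (N - u') := by
  have hm : max N u' = N := max_eq_left h
  have hc : (u':ℝ) ≤ (N:ℝ) := by exact_mod_cast h
  have habs : |(N:ℝ) - (u':ℝ)| = (N:ℝ) - u' := abs_of_nonneg (sub_nonneg.2 hc)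
  have hnat : ((N:ℤ) - (u':ℤ)).natAbs = N - u' := by omega
  have hcast : ((N - u' : ℕ):ℝ) = (N:ℝ) - u' := Nat.cast_sub h
  unfold T
  rw [hm, habs, hnat, hcast,
    show ((N:ℝ) - N) * δ1 + ((N:ℝ) - u') * δ2 = ((N:ℝ) - u') * δ2 by ring,
    show -(((N:ℝ) + u' + ((N:ℝ) - u')) / 2) = -(N:ℝ) by ring]

private lemma sum_range_succ_head (f : ℕ → ℝ) (n : ℕ) :
    ∑ k ∈ range (n+1), f k = f 0 + ∑ k ∈ Icc 1 n, f k := by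
  induction n with
  | zero => simp
  | succ n ih =>
      rw [Finset.sum_range_succ, ih, Finset.sum_Icc_succ_top (by omega : 1 ≤ n + 1)]
      ring

private lemma sum_range_shift (f : ℕ → ℝ) (n : ℕ) :
    ∑ k ∈ range n, f (k+1) = ∑ k ∈ Icc 1 n, f k := by
  induction n with
  | zero => simp
  | succ n ih =>
      rw [Finset.sum_range_succ, ih, Finset.sum_Icc_succ_top (by omega : 1 ≤ n + 1)]

private lemma key (δ1 δ2 : ℝ) (a : ℕ → ℝ) : ∀ Δ : ℕ,
    ∑ u ∈ range (Δ+1), ∑ u' ∈ range (Δ+1), T δ1 δ2 a u u'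
      = (2 - (2:ℝ) ^ (-(Δ:ℝ))) * a 0 + ∑ u ∈ Icc 1 Δ,
          ((2:ℝ) ^ ((u:ℝ) * δ1) + (2:ℝ) ^ ((u:ℝ) * δ2)) * (2:ℝ) ^ (-(u:ℝ)) *
            (2 - (2:ℝ) ^ (-((Δ:ℝ) - (u:ℝ)))) * a u
  | 0 => by
      simp [T]
      norm_num
  | (Δ+1) => by
      have ih := key δ1 δ2 a Δ
      -- split off the last row and last column
      rw [Finset.sum_range_succ]
      have hinner : ∀ u ∈ range (Δ+1),
          ∑ u' ∈ range (Δ+1+1), T δ1 δ2 a u u'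
            = (∑ u' ∈ range (Δ+1), T δ1 δ2 a u u') + T δ1 δ2 a u (Δ+1) :=
        fun u _ => Finset.sum_range_succ _ _
      rw [Finset.sum_congr rfl hinner, Finset.sum_add_distrib, ih]
      -- the new column
      have hcol : ∑ u ∈ range (Δ+1), T δ1 δ2 a u (Δ+1)
          = ∑ k ∈ Icc 1 (Δ+1),
              (2:ℝ) ^ ((k:ℝ) * δ1) * (2:ℝ) ^ (-((Δ+1:ℕ):ℝ)) * a k := by
        rw [← sum_range_shift (fun k => (2:ℝ) ^ ((k:ℝ) * δ1) * (2:ℝ) ^ (-((Δ+1:ℕ):ℝ)) * a k),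
          ← Finset.sum_range_reflect]
        refine Finset.sum_congr rfl fun u hu => ?_
        rw [T_right δ1 δ2 a (show Δ + 1 - 1 - u ≤ Δ + 1 by omega)]
        have h1 : Δ + 1 - (Δ + 1 - 1 - u) = u + 1 := by
          have := Finset.mem_range.mp hu; omega
        rw [h1]
      -- the new row
      have hrow : ∑ u' ∈ range (Δ+1+1), T δ1 δ2 a (Δ+1) u'
          = ∑ k ∈ range (Δ+1+1),
              (2:ℝ) ^ ((k:ℝ) * δ2) * (2:ℝ) ^ (-((Δ+1:ℕ):ℝ)) * a k := by
        rw [← Finset.sum_range_reflect]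
        refine Finset.sum_congr rfl fun u' hu' => ?_
        rw [T_left δ1 δ2 a (by omega : Δ + 1 + 1 - 1 - u' ≤ Δ + 1)]
        have h3 : Δ + 1 - (Δ + 1 + 1 - 1 - u') = u' := by
          have := Finset.mem_range.mp hu'; omega
        rw [h3]
      rw [hcol, hrow,
        sum_range_succ_head (fun k => (2:ℝ) ^ ((k:ℝ) * δ2) * (2:ℝ) ^ (-((Δ+1:ℕ):ℝ)) * a k) (Δ+1)]
      -- split the Icc 1 (Δ+1) sums at the top
      rw [Finset.sum_Icc_succ_top (by omega : 1 ≤ Δ + 1),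
        Finset.sum_Icc_succ_top (by omega : 1 ≤ Δ + 1),
        Finset.sum_Icc_succ_top (by omega : 1 ≤ Δ + 1)]
      push_cast
      -- per-term identity on Icc 1 Δ
      have hsum : ∑ u ∈ Icc 1 Δ,
            ((2:ℝ) ^ ((u:ℝ) * δ1) + (2:ℝ) ^ ((u:ℝ) * δ2)) * (2:ℝ) ^ (-(u:ℝ)) *
              (2 - (2:ℝ) ^ (-((Δ:ℝ) + 1 - (u:ℝ)))) * a u
          = ∑ u ∈ Icc 1 Δ,
              ((((2:ℝ) ^ ((u:ℝ) * δ1) + (2:ℝ) ^ ((u:ℝ) * δ2)) * (2:ℝ) ^ (-(u:ℝ)) *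
                (2 - (2:ℝ) ^ (-((Δ:ℝ) - (u:ℝ)))) * a u
              + (2:ℝ) ^ ((u:ℝ) * δ1) * (2:ℝ) ^ (-((Δ:ℝ) + 1)) * a u)
              + (2:ℝ) ^ ((u:ℝ) * δ2) * (2:ℝ) ^ (-((Δ:ℝ) + 1)) * a u) := by
        refine Finset.sum_congr rfl fun u _ => ?_
        have h1 : (2:ℝ) ^ (-((Δ:ℝ) + 1))
            = (2:ℝ) ^ (-(u:ℝ)) * (2:ℝ) ^ (-((Δ:ℝ) + 1 - (u:ℝ))) := by
          rw [← Real.rpow_add (by norm_num : (0:ℝ) < 2)]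
          ring_nf
        have h2 : (2:ℝ) ^ (-((Δ:ℝ) - (u:ℝ)))
            = 2 * (2:ℝ) ^ (-((Δ:ℝ) + 1 - (u:ℝ))) := by
          rw [show -((Δ:ℝ) - (u:ℝ)) = 1 + -((Δ:ℝ) + 1 - (u:ℝ)) by ring,
            Real.rpow_add (by norm_num : (0:ℝ) < 2), Real.rpow_one]
        rw [h1, h2]
        ring
      have hA : (2:ℝ) ^ (-(Δ:ℝ)) = 2 * (2:ℝ) ^ (-((Δ:ℝ) + 1)) := by
        rw [show -(Δ:ℝ) = 1 + -((Δ:ℝ) + 1) by ring,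
          Real.rpow_add (by norm_num : (0:ℝ) < 2), Real.rpow_one]
      have hz : (2:ℝ) ^ (-((Δ:ℝ) + 1 - ((Δ:ℝ) + 1))) = 1 := by
        norm_num
      have hz2 : (2:ℝ) ^ ((0:ℝ) * δ2) = 1 := by
        rw [zero_mul, Real.rpow_zero]
      rw [hsum, Finset.sum_add_distrib, Finset.sum_add_distrib, hA, hz, hz2]
      ring

/-- The double-sum simplification underlying the asymptotic covariance `𝓘^G_Δ`:
`Σ_{u,u'=0}^Δ 2^{(u∨u'-u)δ₁+(u∨u'-u')δ₂} 2^{-(u+u'+|u-u'|)/2}/(2-2^{-Δ}) a(|u-u'|)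
 = a(0) + Σ_{u=1}^Δ (2^{uδ₁}+2^{uδ₂}) 2^{-u} ((2-2^{-Δ+u})/(2-2^{-Δ})) a(u)`. -/
theorem double_sum_simplification (Δ : ℕ) (δ1 δ2 : ℝ) (a : ℕ → ℝ) :
    ∑ u ∈ Finset.range (Δ+1), ∑ u' ∈ Finset.range (Δ+1),
        (2:ℝ) ^ (((max u u' : ℕ) - (u:ℝ)) * δ1 + ((max u u' : ℕ) - (u':ℝ)) * δ2) *
          ((2:ℝ) ^ (-(((u:ℝ) + (u':ℝ) + |(u:ℝ) - (u':ℝ)|) / 2)) /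
            (2 - (2:ℝ) ^ (-(Δ:ℝ)))) *
          a ((u:ℤ) - (u':ℤ)).natAbs
      = a 0 + ∑ u ∈ Finset.Icc 1 Δ,
          ((2:ℝ) ^ ((u:ℝ) * δ1) + (2:ℝ) ^ ((u:ℝ) * δ2)) * (2:ℝ) ^ (-(u:ℝ)) *
            ((2 - (2:ℝ) ^ (-((Δ:ℝ) - (u:ℝ)))) / (2 - (2:ℝ) ^ (-(Δ:ℝ)))) * a u := by
  have h1 : (2:ℝ) ^ (-(Δ:ℝ)) ≤ 1 :=
    Real.rpow_le_one_of_one_le_of_nonpos (by norm_num)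
      (neg_nonpos.2 (Nat.cast_nonneg Δ))
  have hD : (0:ℝ) < 2 - (2:ℝ) ^ (-(Δ:ℝ)) := by linarith
  have hD' : (2:ℝ) - (2:ℝ) ^ (-(Δ:ℝ)) ≠ 0 := ne_of_gt hD
  have hL : ∑ u ∈ Finset.range (Δ+1), ∑ u' ∈ Finset.range (Δ+1),
        (2:ℝ) ^ (((max u u' : ℕ) - (u:ℝ)) * δ1 + ((max u u' : ℕ) - (u':ℝ)) * δ2) *
          ((2:ℝ) ^ (-(((u:ℝ) + (u':ℝ) + |(u:ℝ) - (u':ℝ)|) / 2)) /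
            (2 - (2:ℝ) ^ (-(Δ:ℝ)))) *
          a ((u:ℤ) - (u':ℤ)).natAbs
      = (∑ u ∈ range (Δ+1), ∑ u' ∈ range (Δ+1), T δ1 δ2 a u u') /
          (2 - (2:ℝ) ^ (-(Δ:ℝ))) := by
    rw [Finset.sum_div]
    refine Finset.sum_congr rfl fun u _ => ?_
    rw [Finset.sum_div]
    refine Finset.sum_congr rfl fun u' _ => ?_
    unfold T
    ring
  rw [hL, key δ1 δ2 a Δ, add_div, mul_div_cancel_left₀ _ hD', Finset.sum_div]
  refine congrArg (a 0 + ·) (Finset.sum_congr rfl fun u _ => ?_)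
  ring
end
end
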